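/- Let θ ∈ [0,1] and let X, Y be real-valued random variables on a common probability space whose cdfs G_X, G_Y are continuous and which admit probability density functions f, g with respect to Lebesgue measure. Define d_θ²(X,Y) = θ·3·E[(G_X(X) − G_Y(Y))²] + (1−θ)·(1/2)·∫(√f − √g)² dλ. Then 0 ≤ d_θ²(X,Y) ≤ 1 (Property: 0 ≤ d_θ ≤ 1). -/

import Mathlib

open MeasureTheory Set
open Filter Topology

/-- The cdf of a real random variable `X` on `(Ω, μ)`. -/
noncomputable def cdfOf {Ω : Type*} [MeasurableSpace Ω] (μ : Measure Ω) (X : Ω → ℝ) :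
    ℝ → ℝ :=
  fun x => (μ {ω | X ω ≤ x}).toReal

/-- The squared dependence distance `d₁²(X,Y) = 3·E[(G_X(X) − G_Y(Y))²]`. -/
noncomputable def d1sq {Ω : Type*} [MeasurableSpace Ω] (μ : Measure Ω) (X Y : Ω → ℝ) : ℝ :=
  3 * ∫ ω, (cdfOf μ X (X ω) - cdfOf μ Y (Y ω)) ^ 2 ∂μ

/-- The squared Hellinger distance `d₀²(f,g) = (1/2)·∫(√f − √g)² dλ` between densities. -/
noncomputable def d0sq (f g : ℝ → ℝ) : ℝ :=
  (1 / 2) * ∫ x, (Real.sqrt (f x) - Real.sqrt (g x)) ^ 2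

section Aux


lemma map_cdf_comp {Ω : Type*} [MeasurableSpace Ω] (μ : Measure Ω) [IsProbabilityMeasure μ]
    (X : Ω → ℝ) (hX : Measurable X) (hGc : Continuous (cdfOf μ X)) :
    Measure.map (fun ω => cdfOf μ X (X ω)) μ = volume.restrict (Icc (0:ℝ) 1) := by
  set ν := Measure.map X μ with hν
  haveI : IsProbabilityMeasure ν := Measure.isProbabilityMeasure_map hX.aemeasurable
  set G := cdfOf μ X with hG
  have hGν : ∀ x, G x = ProbabilityTheory.cdf ν x := by
    intro x
    rw [ProbabilityTheory.cdf_eq_real, measureReal_def, hν, Measure.map_apply hX measurableSet_Iic]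
    rfl
  have hmono : Monotone G := by
    intro a b hab
    exact ENNReal.toReal_mono (measure_ne_top μ _) (measure_mono (fun ω h => le_trans h hab))
  have h0 : ∀ x, 0 ≤ G x := fun x => ENNReal.toReal_nonneg
  have hbot : Tendsto G atBot (𝓝 0) :=
    (ProbabilityTheory.tendsto_cdf_atBot ν).congr fun x => (hGν x).symm
  have htop : Tendsto G atTop (𝓝 1) :=
    (ProbabilityTheory.tendsto_cdf_atTop ν).congr fun x => (hGν x).symm
  have hGmeas : Measurable G := hGc.measurable
  haveI : IsFiniteMeasure (volume.restrict (Icc (0:ℝ) 1)) :=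
    ⟨by simp [Real.volume_Icc]⟩
  haveI : IsProbabilityMeasure (Measure.map (fun ω => G (X ω)) μ) :=
    Measure.isProbabilityMeasure_map (hGmeas.comp hX).aemeasurable
  refine Measure.ext_of_Iic _ _ (fun s => ?_)
  rw [Measure.map_apply (f := fun ω => G (X ω)) (hGmeas.comp hX) measurableSet_Iic,
    Measure.restrict_apply measurableSet_Iic]
  have hpre : (fun ω => G (X ω)) ⁻¹' Iic s = X ⁻¹' (G ⁻¹' Iic s) := rfl
  rw [hpre, ← Measure.map_apply hX (hGmeas measurableSet_Iic), ← hν]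
  rcases lt_or_ge s 0 with hs | hs
  · have h1 : G ⁻¹' Iic s = ∅ :=
      eq_empty_of_forall_notMem fun x hx => absurd (le_trans (h0 x) hx) (not_le.mpr hs)
    have h2 : Iic s ∩ Icc (0:ℝ) 1 = ∅ :=
      eq_empty_of_forall_notMem fun x ⟨hx1, hx2, _⟩ => absurd (le_trans hx2 hx1) (not_le.mpr hs)
    rw [h1, h2]; simp
  rcases le_or_gt 1 s with hs1 | hs1
  · have h1 : G ⁻¹' Iic s = univ := eq_univ_of_forall fun x => by
      have : G x ≤ 1 := by
        rw [hGν x]; exact ProbabilityTheory.cdf_le_one ν x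
      exact le_trans this hs1
    have h2 : Iic s ∩ Icc (0:ℝ) 1 = Icc 0 1 := by
      rw [inter_eq_right]
      exact fun x hx => le_trans hx.2 hs1
    rw [h1, h2, measure_univ, Real.volume_Icc]
    norm_num
  · -- 0 ≤ s < 1
    have hRHS : Iic s ∩ Icc (0:ℝ) 1 = Icc 0 s := by
      ext x
      simp only [mem_inter_iff, mem_Iic, mem_Icc]
      constructor
      · rintro ⟨h1, h2, _⟩; exact ⟨h2, h1⟩
      · rintro ⟨h1, h2⟩; exact ⟨h2, h1, le_trans h2 hs1.le⟩
    rw [hRHS, Real.volume_Icc, sub_zero]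
    by_cases hA : (G ⁻¹' Iic s).Nonempty
    · obtain ⟨x₀, hx₀⟩ := (htop.eventually (eventually_gt_nhds hs1)).exists
      have hbdd : BddAbove (G ⁻¹' Iic s) := ⟨x₀, fun x hx => by
        by_contra h
        push_neg at h
        exact absurd (le_trans (hmono h.le) hx) (not_le.mpr hx₀)⟩
      have hAcl : IsClosed (G ⁻¹' Iic s) := isClosed_Iic.preimage hGc
      set a := sSup (G ⁻¹' Iic s) with ha
      have hmem : a ∈ G ⁻¹' Iic s := hAcl.csSup_mem hA hbdd
      have hAeq : G ⁻¹' Iic s = Iic a :=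
        subset_antisymm (fun x hx => le_csSup hbdd hx)
          (fun x hx => le_trans (hmono hx) hmem)
      have hGa : G a = s := by
        refine le_antisymm hmem ?_
        refine ge_of_tendsto ((hGc.tendsto a).mono_left (nhdsWithin_le_nhds (s := Ioi a))) ?_
        filter_upwards [self_mem_nhdsWithin] with x hx
        have hxA : x ∉ G ⁻¹' Iic s := by
          rw [hAeq]; exact not_le.mpr (mem_Ioi.mp hx)
        exact (not_le.mp hxA).le
      rw [hAeq, ← ProbabilityTheory.ofReal_cdf ν a, ← hGν a, hGa]
    · rw [not_nonempty_iff_eq_empty] at hA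
      have hs0 : s = 0 := by
        refine le_antisymm ?_ hs
        by_contra h
        push_neg at h
        obtain ⟨x, hx⟩ := (hbot.eventually (eventually_lt_nhds h)).exists
        exact absurd (hA ▸ hx.le : x ∈ (∅ : Set ℝ)) (notMem_empty x)
      rw [hA, hs0]; simp


section Moments

variable {Ω : Type*} [MeasurableSpace Ω] (μ : Measure Ω) [IsProbabilityMeasure μ]

lemma integral_comp_uniform {U : Ω → ℝ} (hU : Measurable U)
    (hmap : Measure.map U μ = volume.restrict (Icc (0:ℝ) 1))
    {h : ℝ → ℝ} (hh : Continuous h) :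
    ∫ ω, h (U ω) ∂μ = ∫ x in Icc (0:ℝ) 1, h x := by
  rw [← integral_map hU.aemeasurable (hh.aestronglyMeasurable), hmap]

lemma uniform_mean {U : Ω → ℝ} (hU : Measurable U)
    (hmap : Measure.map U μ = volume.restrict (Icc (0:ℝ) 1)) :
    ∫ ω, U ω ∂μ = 1/2 := by
  have := integral_comp_uniform μ hU hmap (h := fun x => x) continuous_id
  rw [this, integral_Icc_eq_integral_Ioc, ← intervalIntegral.integral_of_le zero_le_one,
    integral_id]
  norm_num

lemma uniform_sq {U : Ω → ℝ} (hU : Measurable U)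
    (hmap : Measure.map U μ = volume.restrict (Icc (0:ℝ) 1)) :
    ∫ ω, (U ω) ^ 2 ∂μ = 1/3 := by
  have := integral_comp_uniform μ hU hmap (h := fun x => x ^ 2) (by continuity)
  rw [this, integral_Icc_eq_integral_Ioc, ← intervalIntegral.integral_of_le zero_le_one,
    integral_pow]
  norm_num

lemma uniform_one_sub_sq {U : Ω → ℝ} (hU : Measurable U)
    (hmap : Measure.map U μ = volume.restrict (Icc (0:ℝ) 1)) :
    ∫ ω, (1 - U ω) ^ 2 ∂μ = 1/3 := by
  have := integral_comp_uniform μ hU hmap (h := fun x => (1 - x) ^ 2) (by continuity)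
  rw [this, integral_Icc_eq_integral_Ioc, ← intervalIntegral.integral_of_le zero_le_one]
  have : (∫ x in (0:ℝ)..1, (1 - x) ^ 2) = ∫ x in (1-(1:ℝ))..(1-0), x ^ 2 := by
    rw [intervalIntegral.integral_comp_sub_left (fun x => x ^ 2) 1]
  rw [this]
  norm_num [integral_pow]

lemma integrable_of_bounded {h : Ω → ℝ} (hm : Measurable h) (C : ℝ)
    (hb : ∀ ω, ‖h ω‖ ≤ C) : Integrable h μ :=
  (integrable_const C).mono' hm.aestronglyMeasurable (ae_of_all _ hb)

lemma key_d1_bound {U V : Ω → ℝ} (hUm : Measurable U) (hVm : Measurable V)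
    (hU01 : ∀ ω, U ω ∈ Icc (0:ℝ) 1) (hV01 : ∀ ω, V ω ∈ Icc (0:ℝ) 1)
    (hUmap : Measure.map U μ = volume.restrict (Icc (0:ℝ) 1))
    (hVmap : Measure.map V μ = volume.restrict (Icc (0:ℝ) 1)) :
    ∫ ω, (U ω - V ω) ^ 2 ∂μ ≤ 1/3 := by
  have intU : Integrable U μ := integrable_of_bounded μ hUm 1 fun ω => by
    have := hU01 ω; rw [Real.norm_eq_abs, abs_le]; constructor <;> linarith [this.1, this.2]
  have intU2 : Integrable (fun ω => (U ω) ^ 2) μ :=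
    integrable_of_bounded μ (hUm.pow_const 2) 1 fun ω => by
      have := hU01 ω; rw [Real.norm_eq_abs, abs_le]; constructor <;> nlinarith [this.1, this.2]
  have intV2 : Integrable (fun ω => (V ω) ^ 2) μ :=
    integrable_of_bounded μ (hVm.pow_const 2) 1 fun ω => by
      have := hV01 ω; rw [Real.norm_eq_abs, abs_le]; constructor <;> nlinarith [this.1, this.2]
  have intW2 : Integrable (fun ω => (1 - V ω) ^ 2) μ :=
    integrable_of_bounded μ (((measurable_const.sub hVm)).pow_const 2) 1 fun ω => by
      have := hV01 ω; rw [Real.norm_eq_abs, abs_le]; constructor <;> nlinarith [this.1, this.2]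
  have intUW : Integrable (fun ω => U ω * (1 - V ω)) μ :=
    integrable_of_bounded μ (hUm.mul (measurable_const.sub hVm)) 1 fun ω => by
      have h1 := hU01 ω; have h2 := hV01 ω
      rw [Real.norm_eq_abs, abs_le]
      constructor <;> nlinarith [h1.1, h1.2, h2.1, h2.2]
  have hEU : ∫ ω, U ω ∂μ = 1/2 := uniform_mean μ hUm hUmap
  have hEU2 : ∫ ω, (U ω) ^ 2 ∂μ = 1/3 := uniform_sq μ hUm hUmap
  have hEV2 : ∫ ω, (V ω) ^ 2 ∂μ = 1/3 := uniform_sq μ hVm hVmap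
  have hEW2 : ∫ ω, (1 - V ω) ^ 2 ∂μ = 1/3 := uniform_one_sub_sq μ hVm hVmap
  -- AM-GM: ∫ U(1-V) ≤ (∫U² + ∫(1-V)²)/2 = 1/3
  have hAMGM : ∫ ω, U ω * (1 - V ω) ∂μ ≤ 1/3 := by
    have hle : ∫ ω, U ω * (1 - V ω) ∂μ ≤ ∫ ω, ((U ω) ^ 2 + (1 - V ω) ^ 2) / 2 ∂μ := by
      refine integral_mono intUW ((intU2.add intW2).div_const 2) fun ω => ?_
      nlinarith [sq_nonneg (U ω - (1 - V ω))]
    calc ∫ ω, U ω * (1 - V ω) ∂μ ≤ ∫ ω, ((U ω) ^ 2 + (1 - V ω) ^ 2) / 2 ∂μ := hle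
      _ = (∫ ω, ((U ω) ^ 2 + (1 - V ω) ^ 2) ∂μ) / 2 := by rw [integral_div]
      _ = ((∫ ω, (U ω) ^ 2 ∂μ) + ∫ ω, (1 - V ω) ^ 2 ∂μ) / 2 := by rw [integral_add intU2 intW2]
      _ = 1/3 := by rw [hEU2, hEW2]; norm_num
  -- ∫ (U - V)² = ∫ U² + ∫ V² - 2(∫U - ∫U(1-V))
  have hexp : ∫ ω, (U ω - V ω) ^ 2 ∂μ
      = (∫ ω, (U ω) ^ 2 ∂μ) + (∫ ω, (V ω) ^ 2 ∂μ)
        - 2 * ((∫ ω, U ω ∂μ) - ∫ ω, U ω * (1 - V ω) ∂μ) := by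
    have : (fun ω => (U ω - V ω) ^ 2)
        = fun ω => ((U ω) ^ 2 + (V ω) ^ 2) - 2 * (U ω - U ω * (1 - V ω)) := by
      funext ω; ring
    have intS : Integrable (fun ω => (U ω) ^ 2 + (V ω) ^ 2) μ := intU2.add intV2
    have intD : Integrable (fun ω => U ω - U ω * (1 - V ω)) μ := intU.sub intUW
    have intT : Integrable (fun ω => 2 * (U ω - U ω * (1 - V ω))) μ := intD.const_mul 2
    rw [this, integral_sub intS intT, integral_add intU2 intV2, integral_const_mul,
      integral_sub intU intUW]
  rw [hexp, hEU, hEU2, hEV2]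
  linarith

end Moments


lemma lintegral_ofReal_density {Ω : Type*} [MeasurableSpace Ω] (μ : Measure Ω)
    [IsProbabilityMeasure μ] (X : Ω → ℝ) (hX : Measurable X) (f : ℝ → ℝ)
    (hXd : Measure.map X μ = volume.withDensity (fun x => ENNReal.ofReal (f x))) :
    ∫⁻ x, ENNReal.ofReal (f x) = 1 := by
  haveI : IsProbabilityMeasure (Measure.map X μ) := Measure.isProbabilityMeasure_map hX.aemeasurable
  have h1 : (Measure.map X μ) univ = 1 := measure_univ
  rw [hXd, withDensity_apply _ MeasurableSet.univ, Measure.restrict_univ] at h1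
  exact h1

lemma integrable_and_integral_density (f : ℝ → ℝ) (hf : Measurable f) (hf0 : ∀ x, 0 ≤ f x)
    (hl : ∫⁻ x, ENNReal.ofReal (f x) = 1) :
    Integrable f volume ∧ ∫ x, f x = 1 := by
  have heq : ∀ x, (‖f x‖₊ : ENNReal) = ENNReal.ofReal (f x) := fun x => by
    exact Real.enorm_eq_ofReal (hf0 x)
  have hfin : HasFiniteIntegral f volume := by
    show ∫⁻ a, (‖f a‖₊ : ENNReal) ∂volume < ⊤
    simp_rw [heq]
    rw [hl]
    exact ENNReal.one_lt_top
  refine ⟨⟨hf.aestronglyMeasurable, hfin⟩, ?_⟩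
  rw [integral_eq_lintegral_of_nonneg_ae (ae_of_all _ hf0) hf.aestronglyMeasurable, hl]
  simp

lemma hellinger_sq_bounds (f g : ℝ → ℝ) (hf : Measurable f) (hg : Measurable g)
    (hf0 : ∀ x, 0 ≤ f x) (hg0 : ∀ x, 0 ≤ g x)
    (hif : Integrable f volume) (hig : Integrable g volume)
    (hfi : ∫ x, f x = 1) (hgi : ∫ x, g x = 1) :
    0 ≤ ∫ x, (Real.sqrt (f x) - Real.sqrt (g x)) ^ 2 ∧
      ∫ x, (Real.sqrt (f x) - Real.sqrt (g x)) ^ 2 ≤ 2 := by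
  have hptwise : ∀ x, (Real.sqrt (f x) - Real.sqrt (g x)) ^ 2 ≤ f x + g x := fun x => by
    nlinarith [Real.sq_sqrt (hf0 x), Real.sq_sqrt (hg0 x), Real.sqrt_nonneg (f x),
      Real.sqrt_nonneg (g x), mul_nonneg (Real.sqrt_nonneg (f x)) (Real.sqrt_nonneg (g x))]
  have hmeas : Measurable fun x => (Real.sqrt (f x) - Real.sqrt (g x)) ^ 2 :=
    (hf.sqrt.sub hg.sqrt).pow_const 2
  have hsum : Integrable (fun x => f x + g x) volume := hif.add hig
  have hint : Integrable (fun x => (Real.sqrt (f x) - Real.sqrt (g x)) ^ 2) volume := by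
    refine hsum.mono' hmeas.aestronglyMeasurable (ae_of_all _ fun x => ?_)
    rw [Real.norm_eq_abs, abs_of_nonneg (sq_nonneg _)]
    exact hptwise x
  constructor
  · exact integral_nonneg fun x => sq_nonneg _
  · calc ∫ x, (Real.sqrt (f x) - Real.sqrt (g x)) ^ 2
        ≤ ∫ x, (f x + g x) := integral_mono hint hsum hptwise
      _ = (∫ x, f x) + ∫ x, g x := integral_add hif hig
      _ = 2 := by rw [hfi, hgi]; norm_num

end Aux

/-- for `θ ∈ [0,1]` and random variables `X`, `Y` with continuous cdfs
admitting densities `f`, `g`, the quantity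
`d_θ²(X,Y) = θ·d₁²(X,Y) + (1−θ)·d₀²(f,g)` satisfies `0 ≤ d_θ² ≤ 1`. -/
theorem dtheta_sq_bounded
    {Ω : Type*} [MeasurableSpace Ω] (μ : Measure Ω) [IsProbabilityMeasure μ]
    (θ : ℝ) (hθ0 : 0 ≤ θ) (hθ1 : θ ≤ 1)
    (X Y : Ω → ℝ) (hX : Measurable X) (hY : Measurable Y)
    (f g : ℝ → ℝ) (hf : Measurable f) (hg : Measurable g)
    (hf0 : ∀ x, 0 ≤ f x) (hg0 : ∀ x, 0 ≤ g x)
    (hXd : Measure.map X μ = volume.withDensity (fun x => ENNReal.ofReal (f x)))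
    (hYd : Measure.map Y μ = volume.withDensity (fun x => ENNReal.ofReal (g x)))
    (hGXc : Continuous (cdfOf μ X)) (hGYc : Continuous (cdfOf μ Y)) :
    0 ≤ θ * d1sq μ X Y + (1 - θ) * d0sq f g ∧
      θ * d1sq μ X Y + (1 - θ) * d0sq f g ≤ 1 := by
  have hUm : Measurable fun ω => cdfOf μ X (X ω) := hGXc.measurable.comp hX
  have hVm : Measurable fun ω => cdfOf μ Y (Y ω) := hGYc.measurable.comp hY
  have cdf_mem : ∀ (Z : Ω → ℝ) (ω : Ω), cdfOf μ Z (Z ω) ∈ Icc (0:ℝ) 1 := fun Z ω =>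
    ⟨ENNReal.toReal_nonneg, by
      show (μ {ω' | Z ω' ≤ Z ω}).toReal ≤ 1
      simpa using ENNReal.toReal_mono ENNReal.one_ne_top prob_le_one⟩
  have key : ∫ ω, (cdfOf μ X (X ω) - cdfOf μ Y (Y ω)) ^ 2 ∂μ ≤ 1/3 :=
    key_d1_bound μ hUm hVm (cdf_mem X) (cdf_mem Y)
      (map_cdf_comp μ X hX hGXc) (map_cdf_comp μ Y hY hGYc)
  have hd1_nonneg : 0 ≤ d1sq μ X Y := by
    have h : 0 ≤ ∫ ω, (cdfOf μ X (X ω) - cdfOf μ Y (Y ω)) ^ 2 ∂μ :=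
      integral_nonneg fun ω => sq_nonneg _
    unfold d1sq; linarith
  have hd1_le : d1sq μ X Y ≤ 1 := by unfold d1sq; linarith
  obtain ⟨hif, hfi⟩ :=
    integrable_and_integral_density f hf hf0 (lintegral_ofReal_density μ X hX f hXd)
  obtain ⟨hig, hgi⟩ :=
    integrable_and_integral_density g hg hg0 (lintegral_ofReal_density μ Y hY g hYd)
  obtain ⟨h0n, h0l⟩ := hellinger_sq_bounds f g hf hg hf0 hg0 hif hig hfi hgi
  have hd0_nonneg : 0 ≤ d0sq f g := by unfold d0sq; linarith
  have hd0_le : d0sq f g ≤ 1 := by unfold d0sq; linarith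
  constructor
  · nlinarith
  · nlinarith
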